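/- In a continuous game with finitely many players, a probability measure π is an ε-correlated equilibrium if and only if for every player i, every positive integer k, all strategies t_i^1,…,t_i^k ∈ C_i, and all Borel measurable functions f_i^1,…,f_i^k : C_i → [0,1] satisfying ∑_{j=1}^k f_i^j(s_i) ≤ 1 for all s_i ∈ C_i, the inequality ∑_{j=1}^k ∫ f_i^j(s_i)[u_i(t_i^j, s_{−i}) − u_i(s)] dπ(s) ≤ ε holds. -/

import Mathlib

open MeasureTheory

section Helpers

lemma measurable_of_continuous_pi {n : ℕ} {C : Fin n → Type*}
    [∀ i, TopologicalSpace (C i)] [∀ i, CompactSpace (C i)] [∀ i, T2Space (C i)]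
    [∀ i, MeasurableSpace (C i)] [∀ i, BorelSpace (C i)]
    {f : (∀ i, C i) → ℝ} (hf : Continuous f) : Measurable f := by
  classical
  let A : Subalgebra ℝ C((∀ i, C i), ℝ) :=
    { carrier := {g | Measurable ⇑g}
      mul_mem' := fun hg hh => Measurable.mul hg hh
      add_mem' := fun hg hh => Measurable.add hg hh
      algebraMap_mem' := fun c =>
        (measurable_const : Measurable fun _ : ∀ i, C i => c) }
  have hsep : A.SeparatesPoints := by
    intro x y hxy
    have : ∃ i, x i ≠ y i := by
      by_contra h; push_neg at h; exact hxy (funext h)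
    obtain ⟨i, hi⟩ := this
    obtain ⟨g, hg0, hg1, -⟩ := exists_continuous_zero_one_of_isClosed
      (isClosed_singleton (x := x i)) (isClosed_singleton (x := y i))
      (Set.disjoint_singleton.2 hi)
    refine ⟨_, ⟨g.comp ⟨fun s => s i, continuous_apply i⟩,
      (g.continuous.measurable.comp (measurable_pi_apply i) : Measurable _), rfl⟩, ?_⟩
    show g (x i) ≠ g (y i)
    rw [hg0 rfl, hg1 rfl]; norm_num
  have htop := ContinuousMap.subalgebra_topologicalClosure_eq_top_of_separatesPoints A hsep
  have hclosed : IsClosed (A : Set C((∀ i, C i), ℝ)) := by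
    rw [← isSeqClosed_iff_isClosed]
    intro g glim hgA hglim
    show Measurable ⇑glim
    apply measurable_of_tendsto_metrizable (f := fun m => ⇑(g m))
    · exact fun m => hgA m
    · rw [tendsto_pi_nhds]
      intro s
      exact ((continuous_eval_const s).tendsto glim).comp hglim
  have hle : A.topologicalClosure ≤ A := Subalgebra.topologicalClosure_minimal le_rfl hclosed
  have : (⟨f, hf⟩ : C((∀ i, C i), ℝ)) ∈ A := hle (htop ▸ Algebra.mem_top)
  exact this


lemma bdd_integrable {α : Type*} [MeasurableSpace α] {μ : Measure α} [IsFiniteMeasure μ]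
    {f : α → ℝ} (hm : AEStronglyMeasurable f μ) (M : ℝ) (h : ∀ x, |f x| ≤ M) :
    Integrable f μ :=
  Integrable.mono' (integrable_const M) hm (ae_of_all _ (by simpa [Real.norm_eq_abs] using h))

lemma measurable_update_comp {n : ℕ} {C : Fin n → Type*} [∀ i, MeasurableSpace (C i)]
    (i : Fin n) {ζ : C i → C i} (hζ : Measurable ζ) :
    Measurable fun s : ∀ i, C i => Function.update s i (ζ (s i)) := by
  apply measurable_pi_lambda
  intro j
  by_cases h : j = i
  · subst h
    simp only [Function.update_self]
    exact hζ.comp (measurable_pi_apply j)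
  · simpa [Function.update_apply, h] using measurable_pi_apply j

lemma sum_indicator_le_one {k : ℕ} {α : Type*} (B : Fin k → Set α)
    (hdisj : ∀ j j', j ≠ j' → B j ∩ B j' = ∅) (x : α) :
    ∑ j, (B j).indicator (fun _ => (1:ℝ)) x ≤ 1 := by
  classical
  by_cases h : ∃ j₀, x ∈ B j₀
  · obtain ⟨j₀, hj₀⟩ := h
    have : ∑ j, (B j).indicator (fun _ => (1:ℝ)) x = 1 := by
      rw [Finset.sum_eq_single j₀]
      · simp [Set.indicator_apply, hj₀]
      · intro b _ hb
        have : x ∉ B b := by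
          intro hxb
          have := hdisj b j₀ hb
          exact absurd (Set.mem_inter hxb hj₀) (by simp [this])
        simp [Set.indicator_apply, this]
      · simp
    linarith
  · push_neg at h
    simp [Set.indicator_apply, h]

end Helpers

-- reverse direction as standalone lemma
lemma reverse_dir (n : ℕ) (C : Fin n → Type*)
    [∀ i, TopologicalSpace (C i)] [∀ i, CompactSpace (C i)] [∀ i, T2Space (C i)]
    [∀ i, MeasurableSpace (C i)] [∀ i, BorelSpace (C i)]
    (u : Fin n → (∀ i, C i) → ℝ) (hu : ∀ i, Continuous (u i))
    (π : Measure (∀ i, C i)) [IsProbabilityMeasure π]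
    (ε : ℝ)
    (H : ∀ i, ∀ k : ℕ, 0 < k → ∀ t : Fin k → C i, ∀ f : Fin k → C i → ℝ,
      (∀ j, Measurable (f j)) →
      (∀ j x, f j x ∈ Set.Icc (0 : ℝ) 1) →
      (∀ x, ∑ j, f j x ≤ 1) →
      ∑ j, ∫ s, f j (s i) * (u i (Function.update s i (t j)) - u i s) ∂π ≤ ε) :
    ∀ i, ∀ ζ : C i → C i, Measurable ζ →
      ∫ s, (u i (Function.update s i (ζ (s i))) - u i s) ∂π ≤ ε := by
  classical
  intro i ζ hζ
  have hum : Measurable (u i) := measurable_of_continuous_pi (hu i)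
  -- nonempty
  have hne : Nonempty (∀ i, C i) := by
    by_contra h
    rw [not_nonempty_iff] at h
    have := measure_univ (μ := π)
    simp [Set.univ_eq_empty_iff.2 h] at this
  have hnei : Nonempty (C i) := ⟨hne.some i⟩
  -- bound on u i
  obtain ⟨M, hM⟩ := isCompact_univ.exists_bound_of_continuousOn (hu i).continuousOn
  have hM' : ∀ s, |u i s| ≤ M := fun s => by simpa [Real.norm_eq_abs] using hM s trivial
  apply le_of_forall_pos_le_add
  intro δ hδ
  -- the map Φ
  set Φ : C(C i, C(∀ i, C i, ℝ)) :=
    ContinuousMap.curry ⟨fun p : C i × (∀ i, C i) => u i (Function.update p.2 i p.1),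
      (hu i).comp (continuous_snd.update i continuous_fst)⟩ with hΦ
  have hΦapp : ∀ (x : C i) (s : ∀ i, C i), Φ x s = u i (Function.update s i x) := by
    intro x s; rfl
  set U : C i → Set (C i) := fun x => ⇑Φ ⁻¹' Metric.ball (Φ x) δ with hU
  have hUopen : ∀ x, IsOpen (U x) := fun x => Φ.continuous.isOpen_preimage _ Metric.isOpen_ball
  have hUmem : ∀ x, x ∈ U x := fun x => by simp [hU, hδ]
  obtain ⟨T, hT⟩ := isCompact_univ.elim_finite_subcover U hUopen
    (fun x _ => Set.mem_iUnion.2 ⟨x, hUmem x⟩)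
  set k := T.card with hk
  have hkpos : 0 < k := by
    rcases hnei with ⟨x₀⟩
    have := hT (Set.mem_univ x₀)
    simp only [Set.mem_iUnion] at this
    obtain ⟨t, ht, -⟩ := this
    exact Finset.card_pos.2 ⟨t, ht⟩
  set e : Fin k → C i := fun j => (T.equivFin.symm j : C i) with he
  -- disjointified sets
  set B : Fin k → Set (C i) :=
    fun j => U (e j) \ (⋃ l ∈ Finset.univ.filter (· < j), U (e l)) with hB
  have hBmeas : ∀ j, MeasurableSet (B j) := by
    intro j
    apply MeasurableSet.diff ((hUopen _).measurableSet)
    exact MeasurableSet.biUnion (Set.to_countable _) (fun l _ => (hUopen _).measurableSet)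
  have hBdisj : ∀ j j', j ≠ j' → B j ∩ B j' = ∅ := by
    intro j j' hne'
    rcases lt_or_gt_of_ne hne' with h | h
    · ext x; simp only [Set.mem_inter_iff, Set.mem_empty_iff_false, iff_false, not_and]
      intro hxj hxj'
      exact hxj'.2 (Set.mem_biUnion (Finset.mem_coe.2 (Finset.mem_filter.2 ⟨Finset.mem_univ _, h⟩)) hxj.1)
    · ext x; simp only [Set.mem_inter_iff, Set.mem_empty_iff_false, iff_false, not_and]
      intro hxj hxj'
      exact hxj.2 (Set.mem_biUnion (Finset.mem_coe.2 (Finset.mem_filter.2 ⟨Finset.mem_univ _, h⟩)) hxj'.1)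
  have hBcover : ∀ x : C i, ∃ j, x ∈ B j := by
    intro x
    have := hT (Set.mem_univ x)
    simp only [Set.mem_iUnion] at this
    obtain ⟨s, hs, hxs⟩ := this
    -- there is some j with x ∈ U (e j)
    have hex : ∃ j : Fin k, x ∈ U (e j) := ⟨T.equivFin ⟨s, hs⟩, by simp [he, hxs]⟩
    obtain ⟨S, hSne⟩ : ∃ S : Finset (Fin k), S = Finset.univ.filter (fun j => x ∈ U (e j)) := ⟨_, rfl⟩
    have hSnonempty : S.Nonempty := by
      obtain ⟨j, hj⟩ := hex
      exact ⟨j, by simp [hSne, hj]⟩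
    obtain ⟨j₀, hj₀mem, hj₀min⟩ := S.exists_min_image id hSnonempty
    refine ⟨j₀, ?_, ?_⟩
    · simpa [hSne] using hj₀mem
    · intro hx
      simp only [Set.mem_iUnion, Finset.mem_filter] at hx
      obtain ⟨l, ⟨-, hl⟩, hxl⟩ := hx
      have : j₀ ≤ l := hj₀min l (by simp [hSne, hxl])
      exact absurd hl (not_lt.2 this)
  -- define f
  set f : Fin k → C i → ℝ := fun j => (ζ ⁻¹' B j).indicator (fun _ => (1:ℝ)) with hf
  have hfm : ∀ j, Measurable (f j) := fun j => measurable_const.indicator (hζ (hBmeas j))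
  have hf01 : ∀ j x, f j x ∈ Set.Icc (0:ℝ) 1 := by
    intro j x
    by_cases h : ζ x ∈ B j <;> simp [hf, Set.indicator_apply, h]
  have hfsum : ∀ x, ∑ j, f j x ≤ 1 := by
    intro x
    have := sum_indicator_le_one (fun j => ζ ⁻¹' B j)
      (fun j j' h => by
        have := hBdisj j j' h
        ext y; simp only [Set.mem_inter_iff, Set.mem_preimage, Set.mem_empty_iff_false, iff_false, not_and]
        intro h1 h2
        exact absurd (Set.mem_inter h1 h2) (by simp [this])) x
    exact this
  have key := H i k hkpos e f hfm hf01 hfsum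
  -- pointwise inequality
  have hpt : ∀ s : ∀ i, C i, u i (Function.update s i (ζ (s i))) - u i s ≤
      (∑ j, f j (s i) * (u i (Function.update s i (e j)) - u i s)) + δ := by
    intro s
    obtain ⟨j₀, hj₀⟩ := hBcover (ζ (s i))
    have hsum : ∑ j, f j (s i) * (u i (Function.update s i (e j)) - u i s)
        = u i (Function.update s i (e j₀)) - u i s := by
      rw [Finset.sum_eq_single j₀]
      · simp [hf, Set.indicator_apply, hj₀]
      · intro b _ hb
        have : ζ (s i) ∉ B b := by
          intro hxb
          exact absurd (Set.mem_inter hxb hj₀) (by simp [hBdisj b j₀ hb])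
        simp [hf, Set.indicator_apply, this]
      · simp
    rw [hsum]
    -- now use dist bound
    have hdist : dist (Φ (ζ (s i))) (Φ (e j₀)) < δ := by
      have : ζ (s i) ∈ U (e j₀) := hj₀.1
      simpa [hU, Metric.mem_ball, dist_comm] using this
    have := ContinuousMap.dist_apply_le_dist (f := Φ (ζ (s i))) (g := Φ (e j₀)) s
    rw [Real.dist_eq, hΦapp, hΦapp] at this
    have habs : |u i (Function.update s i (ζ (s i))) - u i (Function.update s i (e j₀))| ≤ δ :=
      le_trans this (le_of_lt hdist)
    rw [abs_le] at habs
    linarith [habs.2]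
  -- integrate
  have hint1 : Integrable (fun s => u i (Function.update s i (ζ (s i))) - u i s) π := by
    refine bdd_integrable ?_ (2*M) ?_
    · exact ((hum.comp (measurable_update_comp i hζ)).sub
        hum).aestronglyMeasurable
    · intro s
      calc |u i (Function.update s i (ζ (s i))) - u i s|
          ≤ |u i (Function.update s i (ζ (s i)))| + |u i s| := abs_sub _ _
        _ ≤ 2*M := by linarith [hM' (Function.update s i (ζ (s i))), hM' s]
  have hintterm : ∀ j, Integrable (fun s => f j (s i) * (u i (Function.update s i (e j)) - u i s)) π := by
    intro j
    refine bdd_integrable ?_ (2*M) ?_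
    · apply Measurable.aestronglyMeasurable
      exact ((hfm j).comp (measurable_pi_apply i)).mul
        ((hum.comp (measurable_update_comp i (measurable_const (a := e j)))).sub hum)
    · intro s
      rw [abs_mul]
      have h1 : |f j (s i)| ≤ 1 := by
        have := hf01 j (s i); rw [abs_le]; constructor <;> [linarith [this.1]; exact this.2]
      have h2 : |u i (Function.update s i (e j)) - u i s| ≤ 2*M := by
        calc |u i (Function.update s i (e j)) - u i s|
            ≤ |u i (Function.update s i (e j))| + |u i s| := abs_sub _ _
          _ ≤ 2*M := by linarith [hM' (Function.update s i (e j)), hM' s]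
      calc |f j (s i)| * |u i (Function.update s i (e j)) - u i s|
          ≤ 1 * (2*M) := by
            apply mul_le_mul h1 h2 (abs_nonneg _) zero_le_one
        _ = 2*M := one_mul _
  calc ∫ s, (u i (Function.update s i (ζ (s i))) - u i s) ∂π
      ≤ ∫ s, ((∑ j, f j (s i) * (u i (Function.update s i (e j)) - u i s)) + δ) ∂π := by
        apply integral_mono hint1 _ hpt
        exact (integrable_finset_sum _ (fun j _ => hintterm j)).add (integrable_const δ)
    _ = (∑ j, ∫ s, f j (s i) * (u i (Function.update s i (e j)) - u i s) ∂π) + δ := by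
        rw [integral_add (integrable_finset_sum _ (fun j _ => hintterm j)) (integrable_const δ),
          integral_finset_sum _ (fun j _ => hintterm j), integral_const]
        simp
    _ ≤ ε + δ := by linarith [key]

section Forward

lemma forward_dir (n : ℕ) (C : Fin n → Type*)
    [∀ i, TopologicalSpace (C i)] [∀ i, CompactSpace (C i)] [∀ i, T2Space (C i)]
    [∀ i, MeasurableSpace (C i)] [∀ i, BorelSpace (C i)]
    (u : Fin n → (∀ i, C i) → ℝ) (hu : ∀ i, Continuous (u i))
    (π : Measure (∀ i, C i)) [IsProbabilityMeasure π]
    (ε : ℝ)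
    (H : ∀ i, ∀ ζ : C i → C i, Measurable ζ →
      ∫ s, (u i (Function.update s i (ζ (s i))) - u i s) ∂π ≤ ε) :
    ∀ i, ∀ k : ℕ, 0 < k → ∀ t : Fin k → C i, ∀ f : Fin k → C i → ℝ,
      (∀ j, Measurable (f j)) →
      (∀ j x, f j x ∈ Set.Icc (0 : ℝ) 1) →
      (∀ x, ∑ j, f j x ≤ 1) →
      ∑ j, ∫ s, f j (s i) * (u i (Function.update s i (t j)) - u i s) ∂π ≤ ε := by
  classical
  intro i k hk t f hfm hf01 hfsum
  have hum : Measurable (u i) := measurable_of_continuous_pi (hu i)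
  have h0f : ∀ j x, 0 ≤ f j x := fun j x => (hf01 j x).1
  obtain ⟨M, hM⟩ := isCompact_univ.exists_bound_of_continuousOn (hu i).continuousOn
  have hM' : ∀ s, |u i s| ≤ M := fun s => by simpa [Real.norm_eq_abs] using hM s trivial
  -- g functions
  set g : Fin k → (∀ i, C i) → ℝ :=
    fun j s => u i (Function.update s i (t j)) - u i s with hg
  have hgm : ∀ j, Measurable (g j) := fun j =>
    (hum.comp (measurable_update_comp i (measurable_const (a := t j)))).sub hum
  have hgbd : ∀ j s, |g j s| ≤ 2*M := by
    intro j s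
    calc |u i (Function.update s i (t j)) - u i s|
        ≤ |u i (Function.update s i (t j))| + |u i s| := abs_sub _ _
      _ ≤ 2*M := by linarith [hM' (Function.update s i (t j)), hM' s]
  -- partial sums
  set F : Fin k → C i → ℝ :=
    fun j x => ∑ l ∈ Finset.univ.filter (· < j), f l x with hF
  have hFm : ∀ j, Measurable (F j) := fun j =>
    Finset.measurable_sum _ (fun l _ => hfm l)
  have hF0 : ∀ j x, 0 ≤ F j x := fun j x =>
    Finset.sum_nonneg (fun l _ => h0f l x)
  have hFins : ∀ (j : Fin k) (x : C i),
      F j x + f j x = ∑ l ∈ insert j (Finset.univ.filter (· < j)), f l x := by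
    intro j x
    rw [Finset.sum_insert (by simp)]
    ring
  have hFtop : ∀ j x, F j x + f j x ≤ 1 := by
    intro j x
    rw [hFins j x]
    calc ∑ l ∈ insert j (Finset.univ.filter (· < j)), f l x
        ≤ ∑ l, f l x := Finset.sum_le_sum_of_subset_of_nonneg
          (Finset.subset_univ _) (fun l _ _ => h0f l x)
      _ ≤ 1 := hfsum x
  have hFmono : ∀ (j j' : Fin k) (x : C i), j < j' → F j x + f j x ≤ F j' x := by
    intro j j' x hjj'
    rw [hFins j x]
    apply Finset.sum_le_sum_of_subset_of_nonneg _ (fun l _ _ => h0f l x)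
    intro l hl
    simp only [Finset.mem_insert, Finset.mem_filter, Finset.mem_univ, true_and] at hl ⊢
    rcases hl with hl | hl
    · rw [hl]; exact hjj'
    · exact lt_trans hl hjj'
  -- the interval sets
  set A : Fin k → ℝ → Set (C i) :=
    fun j r => {x | F j x ≤ r ∧ r < F j x + f j x} with hA
  have hAdisj : ∀ (r : ℝ) (j j' : Fin k), j ≠ j' →
      ∀ x, x ∈ A j r → x ∈ A j' r → False := by
    intro r j j' hne x hxj hxj'
    rcases lt_or_gt_of_ne hne with h | h
    · have := hFmono j j' x h
      have h1 := hxj.2; have h2 := hxj'.1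
      linarith
    · have := hFmono j' j x h
      have h1 := hxj'.2; have h2 := hxj.1
      linarith
  have hAmeas : ∀ (j : Fin k) (r : ℝ), MeasurableSet (A j r) := by
    intro j r
    exact (measurableSet_le (hFm j) measurable_const).inter
      (measurableSet_lt measurable_const ((hFm j).add (hfm j)))
  -- the deviation functions
  set ζ : ℝ → C i → C i :=
    fun r x => if h : ∃ j, x ∈ A j r then t h.choose else x with hζdef
  have hchoice : ∀ (r : ℝ) (x : C i) (j : Fin k), x ∈ A j r → ζ r x = t j := by
    intro r x j hj
    have h : ∃ j', x ∈ A j' r := ⟨j, hj⟩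
    have hcj : h.choose = j := by
      by_contra hne
      exact hAdisj r h.choose j hne x h.choose_spec hj
    simp only [hζdef, dif_pos h, hcj]
  have hζid : ∀ (r : ℝ) (x : C i), (¬ ∃ j, x ∈ A j r) → ζ r x = x := by
    intro r x h
    simp only [hζdef, dif_neg h]
  have hζmeas : ∀ r, Measurable (ζ r) := by
    intro r E hE
    have heq : ζ r ⁻¹' E =
        (⋃ j, A j r ∩ {x : C i | t j ∈ E}) ∪ ((⋂ j, (A j r)ᶜ) ∩ E) := by
      ext x
      simp only [Set.mem_preimage, Set.mem_union, Set.mem_iUnion, Set.mem_inter_iff,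
        Set.mem_setOf_eq, Set.mem_iInter, Set.mem_compl_iff]
      by_cases h : ∃ j, x ∈ A j r
      · obtain ⟨j, hj⟩ := h
        rw [hchoice r x j hj]
        constructor
        · intro hE'
          exact Or.inl ⟨j, hj, hE'⟩
        · rintro (⟨j', hj', hE'⟩ | ⟨hall, -⟩)
          · have : j' = j := by
              by_contra hne
              exact hAdisj r j' j hne x hj' hj
            rwa [← this]
          · exact absurd hj (hall j)
      · rw [hζid r x h]
        push_neg at h
        constructor
        · intro hE'
          exact Or.inr ⟨h, hE'⟩
        · rintro (⟨j', hj', -⟩ | ⟨-, hE'⟩)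
          · exact absurd hj' (h j')
          · exact hE'
    rw [heq]
    exact (MeasurableSet.iUnion fun j => (hAmeas j r).inter (MeasurableSet.const _)).union
      ((MeasurableSet.iInter fun j => (hAmeas j r).compl).inter hE)
  -- product-space setup
  set μ : Measure ℝ := (volume : Measure ℝ).restrict (Set.Icc (0:ℝ) 1) with hμ
  haveI : IsProbabilityMeasure μ := by
    constructor
    simp [hμ, Measure.restrict_apply_univ, Real.volume_Icc]
  set S : Fin k → Set (ℝ × (∀ i, C i)) :=
    fun j => {p | F j (p.2 i) ≤ p.1 ∧ p.1 < F j (p.2 i) + f j (p.2 i)} with hS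
  have hSmeas : ∀ j, MeasurableSet (S j) := by
    intro j
    have h2 : Measurable fun p : ℝ × (∀ i, C i) => F j (p.2 i) :=
      (hFm j).comp ((measurable_pi_apply i).comp measurable_snd)
    have h3 : Measurable fun p : ℝ × (∀ i, C i) => f j (p.2 i) :=
      (hfm j).comp ((measurable_pi_apply i).comp measurable_snd)
    exact (measurableSet_le h2 measurable_fst).inter
      (measurableSet_lt measurable_fst (h2.add h3))
  set Hfun : ℝ × (∀ i, C i) → ℝ :=
    fun p => ∑ j, (S j).indicator (fun q => g j q.2) p with hHfun
  have hHint : Integrable Hfun (μ.prod π) := by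
    apply integrable_finset_sum
    intro j _
    apply Integrable.indicator _ (hSmeas j)
    refine bdd_integrable ?_ (2*M) ?_
    · exact ((hgm j).comp measurable_snd).aestronglyMeasurable
    · intro p; exact hgbd j p.2
  -- integrability of terms over π
  have hterm : ∀ j, Integrable (fun s => f j (s i) * g j s) π := by
    intro j
    refine bdd_integrable ?_ (2*M) ?_
    · exact (((hfm j).comp (measurable_pi_apply i)).mul (hgm j)).aestronglyMeasurable
    · intro s
      rw [abs_mul]
      have h1 : |f j (s i)| ≤ 1 := by
        rw [abs_le]; exact ⟨by linarith [h0f j (s i)], (hf01 j (s i)).2⟩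
      calc |f j (s i)| * |g j s| ≤ 1 * (2*M) :=
            mul_le_mul h1 (hgbd j s) (abs_nonneg _) zero_le_one
        _ = 2*M := one_mul _
  -- Step 2 : slice integral over r
  have hslice : ∀ s : ∀ i, C i, ∫ r, Hfun (r, s) ∂μ = ∑ j, f j (s i) * g j s := by
    intro s
    have hrw : ∀ j : Fin k, (fun r => (S j).indicator (fun q => g j q.2) (r, s)) =
        (Set.Ico (F j (s i)) (F j (s i) + f j (s i))).indicator (fun _ => g j s) := by
      intro j
      funext r
      by_cases h : F j (s i) ≤ r ∧ r < F j (s i) + f j (s i)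
      · have h1 : (r, s) ∈ S j := h
        have h2 : r ∈ Set.Ico (F j (s i)) (F j (s i) + f j (s i)) := h
        rw [Set.indicator_of_mem h1, Set.indicator_of_mem h2]
      · have h1 : (r, s) ∉ S j := fun hc => h hc
        have h2 : r ∉ Set.Ico (F j (s i)) (F j (s i) + f j (s i)) := fun hc => h hc
        rw [Set.indicator_of_notMem h1, Set.indicator_of_notMem h2]
    have hintr : ∀ j : Fin k, Integrable (fun r => (S j).indicator (fun q => g j q.2) (r, s)) μ := by
      intro j
      rw [hrw j]
      exact (integrable_const (g j s)).indicator measurableSet_Ico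
    calc ∫ r, Hfun (r, s) ∂μ
        = ∑ j, ∫ r, (S j).indicator (fun q => g j q.2) (r, s) ∂μ := by
          rw [← integral_finset_sum _ (fun j _ => hintr j)]
      _ = ∑ j, f j (s i) * g j s := by
          apply Finset.sum_congr rfl
          intro j _
          rw [hrw j, integral_indicator_const _ measurableSet_Ico]
          have hsub : Set.Ico (F j (s i)) (F j (s i) + f j (s i)) ⊆ Set.Icc 0 1 := by
            intro r hr
            exact ⟨le_trans (hF0 j (s i)) hr.1, le_trans (le_of_lt hr.2) (hFtop j (s i))⟩
          rw [hμ, measureReal_def, Measure.restrict_apply measurableSet_Ico,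
            Set.inter_eq_self_of_subset_left hsub, Real.volume_Ico]
          simp only [add_sub_cancel_left, smul_eq_mul]
          rw [ENNReal.toReal_ofReal (h0f j (s i))]
  -- pointwise identity for slices in s
  have hident : ∀ (r : ℝ) (s : ∀ i, C i),
      Hfun (r, s) = u i (Function.update s i (ζ r (s i))) - u i s := by
    intro r s
    have hmemS : ∀ j : Fin k, (r, s) ∈ S j ↔ s i ∈ A j r := by
      intro j; rfl
    by_cases h : ∃ j, s i ∈ A j r
    · obtain ⟨j₀, hj₀⟩ := h
      rw [hchoice r (s i) j₀ hj₀]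
      have : Hfun (r, s) = g j₀ s := by
        simp only [hHfun]
        rw [Finset.sum_eq_single j₀]
        · exact Set.indicator_of_mem ((hmemS j₀).2 hj₀) _
        · intro b _ hb
          apply Set.indicator_of_notMem
          intro hmem
          exact hAdisj r b j₀ hb (s i) ((hmemS b).1 hmem) hj₀
        · simp
      rw [this]
    · rw [hζid r (s i) h, Function.update_eq_self, sub_self]
      simp only [hHfun]
      apply Finset.sum_eq_zero
      intro j _
      apply Set.indicator_of_notMem
      intro hmem
      exact h ⟨j, (hmemS j).1 hmem⟩
  -- put it together
  calc ∑ j, ∫ s, f j (s i) * (u i (Function.update s i (t j)) - u i s) ∂π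
      = ∫ s, ∑ j, f j (s i) * g j s ∂π := by
        rw [integral_finset_sum _ (fun j _ => hterm j)]
    _ = ∫ s, ∫ r, Hfun (r, s) ∂μ ∂π := by
        apply integral_congr_ae
        exact ae_of_all _ (fun s => (hslice s).symm)
    _ = ∫ r, ∫ s, Hfun (r, s) ∂π ∂μ := by
        exact integral_integral_swap (f := fun s r => Hfun (r, s)) hHint.swap
    _ ≤ ε := by
        have hintr : Integrable (fun r => ∫ s, Hfun (r, s) ∂π) μ :=
          hHint.integral_prod_left
        calc ∫ r, ∫ s, Hfun (r, s) ∂π ∂μ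
            ≤ ∫ _, ε ∂μ := by
              apply integral_mono hintr (integrable_const ε)
              intro r
              have : (fun s => Hfun (r, s)) =
                  fun s => u i (Function.update s i (ζ r (s i))) - u i s :=
                funext (fun s => hident r s)
              show ∫ s, Hfun (r, s) ∂π ≤ ε
              rw [this]
              exact H i (ζ r) (hζmeas r)
          _ = ε := by simp

end Forward


theorem stmt_7 (n : ℕ) (C : Fin n → Type*)
    [∀ i, TopologicalSpace (C i)] [∀ i, CompactSpace (C i)] [∀ i, T2Space (C i)]
    [∀ i, MeasurableSpace (C i)] [∀ i, BorelSpace (C i)]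
    (u : Fin n → (∀ i, C i) → ℝ) (hu : ∀ i, Continuous (u i))
    (π : Measure (∀ i, C i)) [IsProbabilityMeasure π] [π.Regular]
    (ε : ℝ) :
    (∀ i, ∀ ζ : C i → C i, Measurable ζ →
      ∫ s, (u i (Function.update s i (ζ (s i))) - u i s) ∂π ≤ ε) ↔
    (∀ i, ∀ k : ℕ, 0 < k → ∀ t : Fin k → C i, ∀ f : Fin k → C i → ℝ,
      (∀ j, Measurable (f j)) →
      (∀ j x, f j x ∈ Set.Icc (0 : ℝ) 1) →
      (∀ x, ∑ j, f j x ≤ 1) →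
      ∑ j, ∫ s, f j (s i) * (u i (Function.update s i (t j)) - u i s) ∂π ≤ ε) :=
  ⟨forward_dir n C u hu π ε, reverse_dir n C u hu π ε⟩
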